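/- Let H be a configurable graph and let f be a configuration on H. If G is obtained from H by either (i) adding a new vertex v and two edges vx and vy, where x and y are vertices of H with f(x) ≠ f(y), or (ii) adding two new vertices u and v and three edges xu, uv, vy, where x and y are vertices of H with f(x) ∩ f(y) ≠ ∅, then f can be extended to a configuration on G (i.e., there is a configuration g on G agreeing with f on V(H)). -/

import Mathlib

open SimpleGraph

/-- `f` is a configuration on `G`. -/
def IsConfig {V : Type*} (G : SimpleGraph V) (f : V → Finset (Fin 5)) : Prop :=
  (∀ v, (f v).card = 2) ∧
  ∀ (v : V) (c : Fin 5), ∃ u, (u = v ∨ G.Adj u v) ∧ c ∈ f u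

/-- A graph is configurable if it admits a configuration. -/
def Configurable {V : Type*} (G : SimpleGraph V) : Prop :=
  ∃ f : V → Finset (Fin 5), IsConfig G f

/-- The graph obtained from `H` by adding one new vertex `v = Sum.inr ()` together
with the two edges `v x` and `v y`. -/
def addVee {W : Type*} (H : SimpleGraph W) (x y : W) : SimpleGraph (W ⊕ Unit) :=
  SimpleGraph.fromEdgeSet
    ({e | ∃ a b, H.Adj a b ∧ e = s(Sum.inl a, Sum.inl b)} ∪
     {s(Sum.inl x, Sum.inr ()), s(Sum.inl y, Sum.inr ())})

/-- The graph obtained from `H` by adding two new vertices `u = Sum.inr false` and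
`v = Sum.inr true` together with the three edges `x u`, `u v`, `v y`. -/
def addPathTwo {W : Type*} (H : SimpleGraph W) (x y : W) : SimpleGraph (W ⊕ Bool) :=
  SimpleGraph.fromEdgeSet
    ({e | ∃ a b, H.Adj a b ∧ e = s(Sum.inl a, Sum.inl b)} ∪
     {s(Sum.inl x, Sum.inr false), s(Sum.inr false, Sum.inr true), s(Sum.inr true, Sum.inl y)})


lemma addVee_adj_inl {W : Type*} {H : SimpleGraph W} {x y a b : W} (h : H.Adj a b) :
    (addVee H x y).Adj (Sum.inl a) (Sum.inl b) := by
  rw [addVee, fromEdgeSet_adj]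
  refine ⟨Or.inl ⟨a, b, h, rfl⟩, by simpa using h.ne⟩

lemma addVee_adj_x {W : Type*} {H : SimpleGraph W} {x y : W} :
    (addVee H x y).Adj (Sum.inl x) (Sum.inr ()) := by
  rw [addVee, fromEdgeSet_adj]
  exact ⟨Or.inr (by simp), by simp⟩

lemma addVee_adj_y {W : Type*} {H : SimpleGraph W} {x y : W} :
    (addVee H x y).Adj (Sum.inl y) (Sum.inr ()) := by
  rw [addVee, fromEdgeSet_adj]
  exact ⟨Or.inr (by simp), by simp⟩

lemma addPathTwo_adj_inl {W : Type*} {H : SimpleGraph W} {x y a b : W} (h : H.Adj a b) :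
    (addPathTwo H x y).Adj (Sum.inl a) (Sum.inl b) := by
  rw [addPathTwo, fromEdgeSet_adj]
  refine ⟨Or.inl ⟨a, b, h, rfl⟩, by simpa using h.ne⟩

lemma addPathTwo_adj_xu {W : Type*} {H : SimpleGraph W} {x y : W} :
    (addPathTwo H x y).Adj (Sum.inl x) (Sum.inr false) := by
  rw [addPathTwo, fromEdgeSet_adj]
  exact ⟨Or.inr (by simp), by simp⟩

lemma addPathTwo_adj_uv {W : Type*} {H : SimpleGraph W} {x y : W} :
    (addPathTwo H x y).Adj (Sum.inr false) (Sum.inr true) := by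
  rw [addPathTwo, fromEdgeSet_adj]
  exact ⟨Or.inr (by simp), by simp⟩

lemma addPathTwo_adj_vy {W : Type*} {H : SimpleGraph W} {x y : W} :
    (addPathTwo H x y).Adj (Sum.inr true) (Sum.inl y) := by
  rw [addPathTwo, fromEdgeSet_adj]
  exact ⟨Or.inr (by simp), by simp⟩

theorem stmt7 {W : Type*} (H : SimpleGraph W) (f : W → Finset (Fin 5))
    (hf : IsConfig H f) :
    (∀ x y : W, f x ≠ f y →
      ∃ g, IsConfig (addVee H x y) g ∧ ∀ a : W, g (Sum.inl a) = f a) ∧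
    (∀ x y : W, (f x ∩ f y).Nonempty →
      ∃ g, IsConfig (addPathTwo H x y) g ∧ ∀ a : W, g (Sum.inl a) = f a) := by
  obtain ⟨hcard, hcov⟩ := hf
  constructor
  · -- part (i)
    intro x y hxy
    have hinter : (f x ∩ f y).card ≤ 1 := by
      by_contra h
      push_neg at h
      have h1 : f x ∩ f y = f x :=
        Finset.eq_of_subset_of_card_le Finset.inter_subset_left (by rw [hcard]; omega)
      have h2 : f x ∩ f y = f y :=
        Finset.eq_of_subset_of_card_le Finset.inter_subset_right (by rw [hcard]; omega)
      exact hxy (h1 ▸ h2)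
    have hun : 3 ≤ (f x ∪ f y).card := by
      have := Finset.card_union_add_card_inter (f x) (f y)
      rw [hcard, hcard] at this
      omega
    have hcompl : ((f x ∪ f y)ᶜ).card ≤ 2 := by
      rw [Finset.card_compl]
      simp only [Fintype.card_fin]
      omega
    obtain ⟨t, hsub, ht2⟩ := Finset.exists_superset_card_eq hcompl (by simp)
    refine ⟨Sum.elim f (fun _ => t), ⟨?_, ?_⟩, fun a => rfl⟩
    · rintro (a | u)
      · exact hcard a
      · exact ht2
    · rintro (a | u) c
      · obtain ⟨u, hu, hc⟩ := hcov a c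
        exact ⟨Sum.inl u, hu.imp (congrArg Sum.inl) addVee_adj_inl, hc⟩
      · cases u
        by_cases hx : c ∈ f x
        · exact ⟨Sum.inl x, Or.inr addVee_adj_x, hx⟩
        by_cases hy : c ∈ f y
        · exact ⟨Sum.inl y, Or.inr addVee_adj_y, hy⟩
        · refine ⟨Sum.inr (), Or.inl rfl, hsub ?_⟩
          simp [hx, hy]
  · -- part (ii)
    intro x y hxy
    obtain ⟨c0, hc0⟩ := hxy
    rw [Finset.mem_inter] at hc0
    have hs : (({c0}ᶜ : Finset (Fin 5))).card = 4 := by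
      rw [Finset.card_compl]
      simp
    obtain ⟨t1, hsub, ht1⟩ := Finset.exists_subset_card_eq (show 2 ≤ ({c0}ᶜ : Finset (Fin 5)).card by omega)
    have ht2 : (({c0}ᶜ : Finset (Fin 5)) \ t1).card = 2 := by
      rw [Finset.card_sdiff_of_subset hsub]
      omega
    have hcover : ∀ c : Fin 5, c ≠ c0 → c ∈ t1 ∨ c ∈ ({c0}ᶜ : Finset (Fin 5)) \ t1 := by
      intro c hc
      by_cases h : c ∈ t1
      · exact Or.inl h
      · exact Or.inr (Finset.mem_sdiff.mpr ⟨by simpa using hc, h⟩)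
    refine ⟨Sum.elim f (fun b => if b then ({c0}ᶜ : Finset (Fin 5)) \ t1 else t1),
      ⟨?_, ?_⟩, fun a => rfl⟩
    · rintro (a | (_ | _))
      · exact hcard a
      · simpa using ht1
      · simpa using ht2
    · rintro (a | (_ | _)) c
      · obtain ⟨u, hu, hc⟩ := hcov a c
        exact ⟨Sum.inl u, hu.imp (congrArg Sum.inl) addPathTwo_adj_inl, hc⟩
      · -- vertex u = inr false
        by_cases h : c = c0
        · exact ⟨Sum.inl x, Or.inr addPathTwo_adj_xu, h ▸ hc0.1⟩
        · rcases hcover c h with h1 | h2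
          · exact ⟨Sum.inr false, Or.inl rfl, by simpa using h1⟩
          · exact ⟨Sum.inr true, Or.inr addPathTwo_adj_uv.symm, by simpa using h2⟩
      · -- vertex v = inr true
        by_cases h : c = c0
        · exact ⟨Sum.inl y, Or.inr addPathTwo_adj_vy.symm, h ▸ hc0.2⟩
        · rcases hcover c h with h1 | h2
          · exact ⟨Sum.inr false, Or.inr addPathTwo_adj_uv, by simpa using h1⟩
          · exact ⟨Sum.inr true, Or.inl rfl, by simpa using h2⟩
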